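/- A group homomorphism from a torus ℝ^k/ℤ^k to (ℝ/ℤ)^n induced by an integer n×k matrix A is injective if and only if the rows of A generate ℤ^k. -/

import Mathlib

lemma aux_addcircle_coe_sum {𝕜 : Type*} [AddCommGroup 𝕜] [LinearOrder 𝕜] [IsOrderedAddMonoid 𝕜] (p : 𝕜)
    {ι : Type*} (s : Finset ι) (f : ι → 𝕜) :
    ((∑ j ∈ s, f j : 𝕜) : AddCircle p) = ∑ j ∈ s, ((f j : AddCircle p)) :=
  map_sum (QuotientAddGroup.mk' (AddSubgroup.zmultiples p)) f s

lemma aux_addcircle_coe_zsmul {𝕜 : Type*} [AddCommGroup 𝕜] [LinearOrder 𝕜] [IsOrderedAddMonoid 𝕜] (p : 𝕜)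
    (m : ℤ) (a : 𝕜) : ((m • a : 𝕜) : AddCircle p) = m • (a : AddCircle p) :=
  map_zsmul (QuotientAddGroup.mk' (AddSubgroup.zmultiples p)) m a

lemma aux_span_sum_zero {k : ℕ} (z : Fin k → AddCircle (1 : ℝ))
    (S : Set (Fin k → ℤ)) (h0 : ∀ v ∈ S, ∑ j, v j • z j = 0)
    {v : Fin k → ℤ} (hv : v ∈ Submodule.span ℤ S) : ∑ j, v j • z j = 0 := by
  induction hv using Submodule.span_induction with
  | mem v hv => exact h0 v hv
  | zero => simp
  | add v w _ _ hv hw =>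
      simp only [Pi.add_apply, add_smul, Finset.sum_add_distrib, hv, hw, add_zero]
  | smul c v _ hv =>
      simp only [Pi.smul_apply, smul_eq_mul, mul_smul, ← Finset.smul_sum, hv, smul_zero]

theorem torus_hom_injective_iff_rows_span (n k : ℕ) (A : Fin n → Fin k → ℤ) :
    Function.Injective
        (fun (x : Fin k → AddCircle (1 : ℝ)) (i : Fin n) => ∑ j, A i j • x j)
      ↔ Submodule.span ℤ (Set.range A) = (⊤ : Submodule ℤ (Fin k → ℤ)) := by
  constructor
  · intro hinj
    by_contra hne
    obtain ⟨v, hv⟩ : ∃ v, v ∉ Submodule.span ℤ (Set.range A) := by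
      by_contra h
      push_neg at h
      exact hne (Submodule.eq_top_iff'.2 h)
    set L := Submodule.span ℤ (Set.range A) with hL
    have hvq : (Submodule.Quotient.mk v : (Fin k → ℤ) ⧸ L) ≠ 0 := by
      simpa [Submodule.Quotient.mk_eq_zero L] using hv
    obtain ⟨c, hc⟩ := CharacterModule.exists_character_apply_ne_zero_of_ne_zero hvq
    set ψ : (Fin k → ℤ) →+ AddCircle (1 : ℚ) :=
      (c : _ →+ AddCircle (1 : ℚ)).comp (L.mkQ.toAddMonoidHom) with hψ
    have hψrow : ∀ i, ψ (A i) = 0 := by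
      intro i
      have hAi : A i ∈ L := Submodule.subset_span ⟨i, rfl⟩
      have : L.mkQ (A i) = 0 := (Submodule.Quotient.mk_eq_zero L).2 hAi
      rw [hψ]; exact (congrArg c this).trans (map_zero c)
    have hψsum : ∀ w : Fin k → ℤ, ψ w = ∑ j, w j • ψ (Pi.single j 1) := by
      intro w
      have hw : w = ∑ j, w j • Pi.single j (1 : ℤ) := by
        funext j'
        simp [Finset.sum_apply, Pi.single_apply, Finset.sum_ite_eq']
      calc ψ w = ψ (∑ j, w j • Pi.single j (1 : ℤ)) := by rw [← hw]
        _ = ∑ j, w j • ψ (Pi.single j 1) := by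
            rw [map_sum]
            exact Finset.sum_congr rfl fun j _ => map_zsmul ψ _ _
    choose q hq using fun j => Quotient.exists_rep (ψ (Pi.single j 1))
    have hq' : ∀ j, ((q j : ℚ) : AddCircle (1 : ℚ)) = ψ (Pi.single j 1) := hq
    set x : Fin k → AddCircle (1 : ℝ) := fun j => (((q j : ℝ)) : AddCircle (1 : ℝ)) with hxdef
    have hfx : (fun i => ∑ j, A i j • x j) = (fun i => ∑ j, A i j • (0 : AddCircle (1 : ℝ))) := by
      funext i
      have h1 : ∑ j, A i j • x j = ((((∑ j, A i j • q j : ℚ) : ℝ)) : AddCircle (1 : ℝ)) := by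
        have hcast : ((∑ j, A i j • q j : ℚ) : ℝ) = ∑ j, A i j • ((q j : ℝ)) := by
          rw [Rat.cast_sum]
          exact Finset.sum_congr rfl fun j _ => by rw [zsmul_eq_mul, zsmul_eq_mul]; push_cast; ring
        rw [hcast, aux_addcircle_coe_sum]
        exact Finset.sum_congr rfl fun j _ => (aux_addcircle_coe_zsmul _ _ _).symm
      have h2 : ((∑ j, A i j • q j : ℚ) : AddCircle (1 : ℚ)) = 0 := by
        rw [aux_addcircle_coe_sum]
        have : ∀ j ∈ Finset.univ, ((A i j • q j : ℚ) : AddCircle (1 : ℚ))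
            = A i j • ψ (Pi.single j 1) := fun j _ => by
          rw [aux_addcircle_coe_zsmul, hq' j]
        rw [Finset.sum_congr rfl this, ← hψsum, hψrow]
      obtain ⟨m, hm⟩ := (AddCircle.coe_eq_zero_iff (p := (1:ℚ))).1 h2
      have hm' : (∑ j, A i j • q j : ℚ) = (m : ℚ) := by rw [← hm]; simp
      rw [h1, hm']
      simp only [smul_zero, Finset.sum_const_zero]
      rw [show ((m : ℚ) : ℝ) = (m : ℝ) by push_cast; ring]
      exact (AddCircle.coe_eq_zero_iff _).2 ⟨m, by simp⟩
    have hx0 : x = 0 := hinj hfx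
    have hψv : ψ v ≠ 0 := hc
    rw [hψsum] at hψv
    obtain ⟨j, -, hj⟩ := Finset.exists_ne_zero_of_sum_ne_zero hψv
    have hj' : ψ (Pi.single j 1) ≠ 0 := fun h => hj (by rw [h, smul_zero])
    apply hj'
    have hxj : x j = 0 := congrFun hx0 j
    obtain ⟨m, hm⟩ := (AddCircle.coe_eq_zero_iff (p := (1:ℝ))).1 hxj
    have hqm : q j = (m : ℚ) := by
      have : (q j : ℝ) = (m : ℝ) := by rw [← hm]; simp
      exact_mod_cast this
    rw [← hq' j, hqm]
    exact (AddCircle.coe_eq_zero_iff _).2 ⟨m, by simp⟩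
  · intro hspan x y hxy
    funext j
    have hz : ∀ i, ∑ j', A i j' • (x j' - y j') = 0 := by
      intro i
      have := congrFun hxy i
      simp only at this
      simp only [smul_sub, Finset.sum_sub_distrib, this, sub_self]
    have hsingle : (Pi.single j 1 : Fin k → ℤ) ∈ Submodule.span ℤ (Set.range A) := by
      rw [hspan]; trivial
    have := aux_span_sum_zero (fun j' => x j' - y j') (Set.range A)
      (by rintro v ⟨i, rfl⟩; exact hz i) hsingle
    have hxy' : x j - y j = 0 := by
      simpa [Pi.single_apply, Finset.sum_ite_eq'] using this
    exact sub_eq_zero.1 hxy'
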